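/- arXiv:2303.10569 — 3 statements merged into one kernel-verified Lean document; each statement's English description precedes it below -/
import Mathlib

section
/- For every γ ≥ 1/2 there exists a constant C > 0 such that for all t ≥ 0 and all r > 0: ∫_{t+r}^∞ ⟨ξ⟩^{−1} · ( ∫_{t−r}^{t+r} (1+η²)^{−1−γ}·1_{\{ξ^{1/2} < η < ξ/2\}}(η) dη ) dξ ≤ C·r/⟨t+r⟩². -/
noncomputable section

open MeasureTheory Real Set Filter Topology

/-- Japanese bracket ⟨q⟩ = √(1+q²). -/
noncomputable def jb (q : ℝ) : ℝ := Real.sqrt (1 + q ^ 2)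

lemma jb_pos (q : ℝ) : 0 < jb q := Real.sqrt_pos.2 (by positivity)

lemma jb_ge (q : ℝ) : q ≤ jb q := by
  have h : q ≤ |q| := le_abs_self q
  have h2 : |q| = Real.sqrt (q ^ 2) := by
    rw [Real.sqrt_sq_eq_abs]
  calc q ≤ |q| := h
    _ = Real.sqrt (q ^ 2) := h2
    _ ≤ jb q := Real.sqrt_le_sqrt (by nlinarith)

lemma jb_sq (q : ℝ) : jb q ^ 2 = 1 + q ^ 2 := Real.sq_sqrt (by positivity)

/-- Key pointwise bound: for `1/2 ≤ γ`, `0 < b ≤ η`, `(1+η²)^(-1-γ) ≤ (b³)⁻¹`. -/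
lemma rpow_bound {γ b η : ℝ} (hγ : 1/2 ≤ γ) (hb : 0 < b) (hbη : b ≤ η) :
    (1 + η ^ 2) ^ (-1 - γ) ≤ (b ^ 3)⁻¹ := by
  have h1 : (1 + η ^ 2 : ℝ) ^ (-1 - γ) ≤ (1 + η ^ 2) ^ (-(3/2) : ℝ) :=
    Real.rpow_le_rpow_of_exponent_le (by nlinarith) (by linarith)
  have h2 : ((1 + η ^ 2 : ℝ)) ^ (-(3/2) : ℝ) ≤ ((b ^ 2 : ℝ)) ^ (-(3/2) : ℝ) :=
    Real.rpow_le_rpow_of_nonpos (by positivity) (by nlinarith) (by norm_num)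
  have h3 : ((b ^ 2 : ℝ)) ^ (-(3/2) : ℝ) = (b ^ 3)⁻¹ := by
    rw [← Real.rpow_natCast b 2, ← Real.rpow_mul hb.le]
    rw [show ((2:ℕ):ℝ) * (-(3/2)) = -3 by norm_num]
    rw [Real.rpow_neg hb.le]
    rw [show (3:ℝ) = ((3:ℕ):ℝ) by norm_num, Real.rpow_natCast]
  linarith [h3 ▸ h2]

lemma rpow_neg3_eq {x : ℝ} (hx : 0 < x) : x ^ (-3 : ℝ) = (x ^ 3)⁻¹ := by
  rw [Real.rpow_neg hx.le]
  rw [show (3:ℝ) = ((3:ℕ):ℝ) by norm_num, Real.rpow_natCast]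

/-- the radial weighted double integral estimate
(Lemma A.2 of the paper), bounding the remainder produced by the
interior part of the error of the asymptotic solution. -/
theorem radial_estimate_interior (γ : ℝ) (hγ : 1/2 ≤ γ) :
    ∃ C : ℝ, 0 < C ∧ ∀ t r : ℝ, 0 ≤ t → 0 < r →
      (∫ ξ in Set.Ioi (t + r),
          (jb ξ)⁻¹ *
            ∫ η in (t - r)..(t + r),
              (1 + η ^ 2) ^ (-1 - γ) *
                (if Real.sqrt ξ < η ∧ η < ξ / 2 then (1:ℝ) else 0)) ≤
        C * r / jb (t + r) ^ 2 := by
  refine ⟨32, by norm_num, fun t r ht hr => ?_⟩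
  set a : ℝ := t + r with ha
  have ha0 : 0 < a := by positivity
  have htr : t - r ≤ t + r := by linarith
  -- notation for the inner integrand
  set h : ℝ → ℝ → ℝ := fun ξ η => (1 + η ^ 2) ^ (-1 - γ) *
      (if Real.sqrt ξ < η ∧ η < ξ / 2 then (1:ℝ) else 0) with hh
  have hnonneg : ∀ ξ η, 0 ≤ h ξ η := by
    intro ξ η
    apply mul_nonneg (Real.rpow_nonneg (by positivity) _)
    split <;> norm_num
  -- the inner integral
  set J : ℝ → ℝ := fun ξ => ∫ η in (t - r)..(t + r), h ξ η with hJ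
  have hJnonneg : ∀ ξ, 0 ≤ J ξ :=
    fun ξ => intervalIntegral.integral_nonneg htr (fun η _ => hnonneg ξ η)
  have hFnonneg : ∀ ξ, 0 ≤ (jb ξ)⁻¹ * J ξ :=
    fun ξ => mul_nonneg (inv_nonneg.2 (jb_pos ξ).le) (hJnonneg ξ)
  have hrhs : 32 * r / jb a ^ 2 = 32 * r / (1 + a ^ 2) := by rw [jb_sq]
  rw [hrhs]
  have hden : (0:ℝ) < 1 + a ^ 2 := by positivity
  by_cases ha2 : a ≤ 2
  · -- degenerate case: the integrand vanishes identically
    have hzero : ∀ ξ η, η ∈ Set.Icc (t - r) (t + r) → h ξ η = 0 := by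
      intro ξ η hη
      rcases hη with ⟨_, hη2⟩
      rw [hh]
      simp only
      rw [if_neg, mul_zero]
      rintro ⟨h1, h2⟩
      have hξ0 : 0 ≤ ξ := by
        by_contra hc
        push_neg at hc
        have : Real.sqrt ξ = 0 := Real.sqrt_eq_zero_of_nonpos hc.le
        rw [this] at h1
        linarith
      have hs : Real.sqrt ξ * Real.sqrt ξ = ξ := Real.mul_self_sqrt hξ0
      have h4 : 2 * Real.sqrt ξ < ξ := by linarith
      have hsp : 2 < Real.sqrt ξ := by nlinarith [Real.sqrt_nonneg ξ]
      have : 2 < η := lt_trans hsp h1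
      linarith
    have hJ0 : ∀ ξ, J ξ = 0 := by
      intro ξ
      rw [hJ]
      simp only
      rw [intervalIntegral.integral_congr (g := fun _ => (0:ℝ))
        (by rw [Set.uIcc_of_le htr]; exact fun η hη => hzero ξ η hη)]
      simp
    have : (∫ ξ in Set.Ioi a, (jb ξ)⁻¹ * J ξ) = 0 := by
      rw [MeasureTheory.setIntegral_congr_fun measurableSet_Ioi
        (fun ξ _ => by rw [hJ0 ξ, mul_zero])]
      simp
    rw [this]
    positivity
  · push_neg at ha2
    by_cases hcase : a ≤ 4 * r
    · -- Case i : r is comparable to a; use the full η-integral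
      have hJbound : ∀ ξ, ξ ∈ Set.Ioi a → J ξ ≤ ξ⁻¹ * (1/2) := by
        intro ξ hξ
        have hξ0 : 0 < ξ := lt_trans ha0 hξ
        have hs : 0 < Real.sqrt ξ := Real.sqrt_pos.2 hξ0
        have hgint : Integrable ((Set.Ioi (Real.sqrt ξ)).indicator
            (fun η => η ^ (-3 : ℝ))) :=
          ((integrableOn_Ioi_rpow_of_lt (by norm_num) hs).integrable_indicator
            measurableSet_Ioi)
        have hgnn : ∀ η, 0 ≤ (Set.Ioi (Real.sqrt ξ)).indicator
            (fun η => η ^ (-3 : ℝ)) η := by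
          intro η
          apply Set.indicator_nonneg
          intro y hy
          exact Real.rpow_nonneg (le_of_lt (lt_trans hs hy)) _
        have hle : ∀ η, h ξ η ≤ (Set.Ioi (Real.sqrt ξ)).indicator
            (fun η => η ^ (-3 : ℝ)) η := by
          intro η
          rw [hh]
          simp only
          by_cases hc : Real.sqrt ξ < η ∧ η < ξ / 2
          · rw [if_pos hc, mul_one, Set.indicator_of_mem (Set.mem_Ioi.2 hc.1)]
            have hη0 : 0 < η := lt_trans hs hc.1
            rw [rpow_neg3_eq hη0]
            exact rpow_bound hγ hη0 le_rfl
          · rw [if_neg hc, mul_zero]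
            exact hgnn η
        rw [hJ]
        simp only
        rw [intervalIntegral.integral_of_le htr]
        calc (∫ η in Set.Ioc (t - r) (t + r), h ξ η)
            ≤ ∫ η in Set.Ioc (t - r) (t + r),
                (Set.Ioi (Real.sqrt ξ)).indicator (fun η => η ^ (-3 : ℝ)) η :=
              integral_mono_of_nonneg (Filter.Eventually.of_forall (hnonneg ξ))
                hgint.restrict (Filter.Eventually.of_forall hle)
          _ ≤ ∫ η, (Set.Ioi (Real.sqrt ξ)).indicator (fun η => η ^ (-3 : ℝ)) η :=
              setIntegral_le_integral hgint (Filter.Eventually.of_forall hgnn)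
          _ = ∫ η in Set.Ioi (Real.sqrt ξ), η ^ (-3 : ℝ) :=
              integral_indicator measurableSet_Ioi
          _ = -Real.sqrt ξ ^ (-3 + 1 : ℝ) / (-3 + 1) :=
              integral_Ioi_rpow_of_lt (by norm_num) hs
          _ = ξ⁻¹ * (1/2) := by
              rw [show (-3 + 1 : ℝ) = -2 by norm_num, Real.rpow_neg hs.le]
              rw [show (2:ℝ) = ((2:ℕ):ℝ) by norm_num, Real.rpow_natCast,
                Real.sq_sqrt hξ0.le]
              ring
      calc (∫ ξ in Set.Ioi a, (jb ξ)⁻¹ * J ξ)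
          ≤ ∫ ξ in Set.Ioi a, ξ ^ (-2 : ℝ) * (1/2) := by
            apply integral_mono_of_nonneg
              (Filter.Eventually.of_forall hFnonneg)
              (((integrableOn_Ioi_rpow_of_lt (by norm_num) ha0).mul_const _))
            refine (ae_restrict_iff' measurableSet_Ioi).2
              (Filter.Eventually.of_forall fun ξ hξ => ?_)
            have hξ0 : 0 < ξ := lt_trans ha0 hξ
            have hjb : (jb ξ)⁻¹ ≤ ξ⁻¹ := by
              apply inv_anti₀ hξ0 (jb_ge ξ)
            have : (jb ξ)⁻¹ * J ξ ≤ ξ⁻¹ * (ξ⁻¹ * (1/2)) := by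
              apply mul_le_mul hjb (hJbound ξ hξ) (hJnonneg ξ) (by positivity)
            calc (jb ξ)⁻¹ * J ξ ≤ ξ⁻¹ * (ξ⁻¹ * (1/2)) := this
              _ = ξ ^ (-2 : ℝ) * (1/2) := by
                  rw [Real.rpow_neg hξ0.le,
                    show (2:ℝ) = ((2:ℕ):ℝ) by norm_num, Real.rpow_natCast]
                  field_simp
        _ = (-a ^ (-2 + 1 : ℝ) / (-2 + 1)) * (1/2) := by
            rw [integral_mul_const, integral_Ioi_rpow_of_lt (by norm_num) ha0]
        _ = a⁻¹ * (1/2) := by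
            rw [show (-2 + 1 : ℝ) = -1 by norm_num, Real.rpow_neg_one]
            ring
        _ ≤ 32 * r / (1 + a ^ 2) := by
            rw [inv_mul_eq_div, div_le_div_iff₀ (by positivity) hden]
            nlinarith [mul_le_mul_of_nonneg_right hcase ha0.le, mul_pos ha0 hr]
    · -- Case ii : r < a/4, so η > a/2 on the support
      push_neg at hcase
      have hb2 : (0:ℝ) < a / 2 := by linarith
      -- J ξ = 0 for ξ > a²
      have hJzero : ∀ ξ, a ^ 2 < ξ → J ξ = 0 := by
        intro ξ hξ
        have hsa : a ≤ Real.sqrt ξ := by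
          rw [show a = Real.sqrt (a ^ 2) from (Real.sqrt_sq ha0.le).symm]
          exact Real.sqrt_le_sqrt hξ.le
        rw [hJ]
        simp only
        rw [intervalIntegral.integral_congr (g := fun _ => (0:ℝ))]
        · simp
        · rw [Set.uIcc_of_le htr]
          intro η hη
          rw [hh]
          simp only
          rw [if_neg, mul_zero]
          rintro ⟨h1, _⟩
          have : η ≤ a := hη.2
          linarith
      -- J ξ ≤ 16 r / a³ always
      have hJbound : ∀ ξ, J ξ ≤ 2 * r * ((a / 2) ^ 3)⁻¹ := by
        intro ξ
        rw [hJ]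
        simp only
        rw [intervalIntegral.integral_of_le htr]
        have hconst : IntegrableOn (fun _ : ℝ => ((a / 2) ^ 3)⁻¹)
            (Set.Ioc (t - r) (t + r)) := by
          apply integrableOn_const measure_Ioc_lt_top.ne
        calc (∫ η in Set.Ioc (t - r) (t + r), h ξ η)
            ≤ ∫ _η in Set.Ioc (t - r) (t + r), ((a / 2) ^ 3)⁻¹ := by
              apply integral_mono_of_nonneg
                (Filter.Eventually.of_forall (hnonneg ξ)) hconst
              refine (ae_restrict_iff' measurableSet_Ioc).2
                (Filter.Eventually.of_forall fun η hη => ?_)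
              rw [hh]
              simp only
              by_cases hc : Real.sqrt ξ < η ∧ η < ξ / 2
              · rw [if_pos hc, mul_one]
                apply rpow_bound hγ hb2
                have : t - r < η := hη.1
                linarith
              · rw [if_neg hc, mul_zero]
                positivity
          _ = 2 * r * ((a / 2) ^ 3)⁻¹ := by
              rw [setIntegral_const, Real.volume_real_Ioc, smul_eq_mul,
                max_eq_left (by linarith : (0:ℝ) ≤ t + r - (t - r))]
              ring_nf
      -- pointwise domination by an indicator function
      have hgint : Integrable ((Set.Ioc a (a ^ 2)).indicator
          (fun _ : ℝ => 16 * r / a ^ 4)) :=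
        ((integrableOn_const measure_Ioc_lt_top.ne).integrable_indicator
          measurableSet_Ioc)
      calc (∫ ξ in Set.Ioi a, (jb ξ)⁻¹ * J ξ)
          ≤ ∫ ξ in Set.Ioi a, (Set.Ioc a (a ^ 2)).indicator
              (fun _ : ℝ => 16 * r / a ^ 4) ξ := by
            apply integral_mono_of_nonneg
              (Filter.Eventually.of_forall hFnonneg) hgint.restrict
            refine (ae_restrict_iff' measurableSet_Ioi).2
              (Filter.Eventually.of_forall fun ξ hξ => ?_)
            have hξa : a < ξ := hξ
            show (jb ξ)⁻¹ * J ξ ≤ _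
            by_cases hc : ξ ≤ a ^ 2
            · rw [Set.indicator_of_mem (Set.mem_Ioc.2 ⟨hξa, hc⟩)]
              have hjb : (jb ξ)⁻¹ ≤ a⁻¹ := by
                apply inv_anti₀ ha0 (le_trans hξa.le (jb_ge ξ))
              calc (jb ξ)⁻¹ * J ξ ≤ a⁻¹ * (2 * r * ((a / 2) ^ 3)⁻¹) :=
                  mul_le_mul hjb (hJbound ξ) (hJnonneg ξ) (by positivity)
                _ = 16 * r / a ^ 4 := by
                    field_simp
                    ring
            · rw [Set.indicator_of_notMem (fun hmem => hc hmem.2)]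
              rw [hJzero ξ (lt_of_not_ge hc), mul_zero]
        _ = (a ^ 2 - a) * (16 * r / a ^ 4) := by
            rw [integral_indicator measurableSet_Ioc,
              Measure.restrict_restrict measurableSet_Ioc,
              Set.inter_eq_left.2 Set.Ioc_subset_Ioi_self,
              setIntegral_const, Real.volume_real_Ioc, smul_eq_mul,
              max_eq_left (by nlinarith : (0:ℝ) ≤ a ^ 2 - a)]
        _ ≤ 32 * r / (1 + a ^ 2) := by
            rw [show (a ^ 2 - a) * (16 * r / a ^ 4) = (a ^ 2 - a) * 16 * r / a ^ 4
              by ring, div_le_div_iff₀ (by positivity) hden]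
            nlinarith [mul_nonneg hr.le (mul_nonneg (sq_nonneg a) (sq_nonneg (a - 1))),
              mul_nonneg hr.le ha0.le, mul_nonneg hr.le (mul_nonneg ha0.le (sq_nonneg (a - 1))),
              mul_nonneg hr.le (mul_nonneg ha0.le (mul_nonneg ha0.le ha0.le)),
              mul_nonneg (mul_nonneg hr.le ha0.le) (sq_nonneg (a - 1))]
end
end

section
/- Let L: [0,1] → ℝ be continuously differentiable. Then lim_{z₀→0⁺} [ ∫_{z₀}^1 L(z)·(z² − z₀²)^{−1/2} dz − L(0)·ln(2/z₀) ] = ∫₀^1 (L(z) − L(0))/z dz, where the integral on the right-hand side converges absolutely. -/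
noncomputable section

open MeasureTheory Real Set Filter Topology

lemma kernel_int' {z0 : ℝ} (h0 : 0 < z0) (h1 : z0 < 1) :
    IntegrableOn (fun z => (Real.sqrt (z ^ 2 - z0 ^ 2))⁻¹) (Set.Ioc z0 1) := by
  have hmeas : AEStronglyMeasurable (fun z => (Real.sqrt (z ^ 2 - z0 ^ 2))⁻¹)
      (volume.restrict (Set.Ioc z0 1)) := by
    exact (((continuous_pow 2).sub continuous_const).sqrt.measurable.inv).aestronglyMeasurable
  have hbint : IntegrableOn (fun z => (Real.sqrt z0)⁻¹ * ((z - z0) ^ (-(1/2) : ℝ)))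
      (Set.Ioc z0 1) := by
    have h := (intervalIntegral.intervalIntegrable_rpow' (a := 0) (b := 1 - z0)
      (r := (-(1/2) : ℝ)) (by norm_num)).comp_sub_right z0
    simp only [zero_add, sub_add_cancel] at h
    have h2 := h.const_mul (Real.sqrt z0)⁻¹
    exact (intervalIntegrable_iff_integrableOn_Ioc_of_le h1.le).mp h2
  refine hbint.mono' hmeas ?_
  rw [ae_restrict_iff' measurableSet_Ioc]
  refine Filter.Eventually.of_forall fun z hz => ?_
  have hz0 : 0 < z - z0 := sub_pos.mpr hz.1
  have hkey : Real.sqrt z0 * Real.sqrt (z - z0) ≤ Real.sqrt (z ^ 2 - z0 ^ 2) := by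
    rw [← Real.sqrt_mul h0.le]
    apply Real.sqrt_le_sqrt
    nlinarith [hz.1, h0]
  have hpos : 0 < Real.sqrt z0 * Real.sqrt (z - z0) :=
    mul_pos (Real.sqrt_pos.mpr h0) (Real.sqrt_pos.mpr hz0)
  have : (Real.sqrt (z ^ 2 - z0 ^ 2))⁻¹ ≤ (Real.sqrt z0 * Real.sqrt (z - z0))⁻¹ :=
    inv_anti₀ hpos hkey
  rw [Real.norm_eq_abs, abs_of_nonneg (by positivity)]
  refine this.trans_eq ?_
  rw [mul_inv, Real.rpow_neg hz0.le, ← Real.sqrt_eq_rpow]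

lemma I1_val' {z0 : ℝ} (h0 : 0 < z0) (h1 : z0 < 1) :
    ∫ z in Set.Ioc z0 1, (Real.sqrt (z ^ 2 - z0 ^ 2))⁻¹ =
      Real.log (1 + Real.sqrt (1 - z0 ^ 2)) - Real.log z0 := by
  have hle : z0 ≤ 1 := h1.le
  have key := intervalIntegral.integral_eq_sub_of_hasDeriv_right_of_le hle
    (f := fun z => Real.log (z + Real.sqrt (z ^ 2 - z0 ^ 2)))
    (f' := fun z => (Real.sqrt (z ^ 2 - z0 ^ 2))⁻¹) ?_ ?_ ?_
  · rw [← intervalIntegral.integral_of_le hle, key]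
    rw [show z0 ^ 2 - z0 ^ 2 = 0 by ring, show (1:ℝ) ^ 2 - z0 ^ 2 = 1 - z0 ^ 2 by ring,
      Real.sqrt_zero, add_zero]
  · apply ContinuousOn.log
    · exact (continuousOn_id.add (((continuous_pow 2).sub continuous_const).sqrt.continuousOn))
    · intro x hx
      have : 0 < x := lt_of_lt_of_le h0 hx.1
      positivity
  · intro x hx
    have hxpos : 0 < x := h0.trans hx.1
    have hpos : 0 < x ^ 2 - z0 ^ 2 := by nlinarith [hx.1]
    set s := Real.sqrt (x ^ 2 - z0 ^ 2) with hs
    have hspos : 0 < s := Real.sqrt_pos.mpr hpos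
    have h1' : HasDerivAt (fun z : ℝ => z ^ 2 - z0 ^ 2) (2 * x) x := by
      simpa using (hasDerivAt_pow 2 x).sub_const (z0 ^ 2)
    have h2 : HasDerivAt (fun z : ℝ => Real.sqrt (z ^ 2 - z0 ^ 2))
        (2 * x / (2 * s)) x := h1'.sqrt (ne_of_gt hpos)
    have h3 : HasDerivAt (fun z : ℝ => z + Real.sqrt (z ^ 2 - z0 ^ 2))
        (1 + 2 * x / (2 * s)) x := (hasDerivAt_id x).add h2
    have h4 : HasDerivAt (fun z : ℝ => Real.log (z + Real.sqrt (z ^ 2 - z0 ^ 2)))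
        ((1 + 2 * x / (2 * s)) / (x + s)) x := by
      refine h3.log ?_
      have : 0 ≤ s := hspos.le
      positivity
    have heq : (1 + 2 * x / (2 * s)) / (x + s) = s⁻¹ := by
      rw [div_eq_iff (by positivity)]
      field_simp
      ring
    rw [heq] at h4
    exact h4.hasDerivWithinAt
  · exact (intervalIntegrable_iff_integrableOn_Ioc_of_le hle).mpr (kernel_int' h0 h1)

lemma lip' {L : ℝ → ℝ} (hL : ContDiffOn ℝ 1 L (Set.Icc 0 1)) :
    ∃ C : ℝ, 0 ≤ C ∧ ∀ z ∈ Set.Icc (0:ℝ) 1, |L z - L 0| ≤ C * z := by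
  have hd : DifferentiableOn ℝ L (Set.Icc 0 1) := hL.differentiableOn one_ne_zero
  have hcd : ContinuousOn (derivWithin L (Set.Icc 0 1)) (Set.Icc 0 1) :=
    hL.continuousOn_derivWithin (uniqueDiffOn_Icc one_pos) le_rfl
  obtain ⟨C, hC⟩ := isCompact_Icc.exists_bound_of_continuousOn hcd
  refine ⟨max C 0, le_max_right _ _, fun z hz => ?_⟩
  have := (convex_Icc (0:ℝ) 1).norm_image_sub_le_of_norm_derivWithin_le (C := max C 0) hd
    (fun x hx => (hC x hx).trans (le_max_left _ _))
    (Set.left_mem_Icc.mpr zero_le_one) hz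
  simpa [Real.norm_eq_abs, abs_of_nonneg hz.1] using this

/-- the one-dimensional limit giving the leading terms of the
expansion of the exterior homogeneous solution near the light cone
(Appendix B.1.2 of the paper): as z₀ → 0⁺,
∫_{z₀}^1 L(z)(z²−z₀²)^{−1/2} dz − L(0)·ln(2/z₀) → ∫₀^1 (L(z)−L(0))/z dz. -/
theorem exterior_expansion_one_dim
    (L : ℝ → ℝ) (hL : ContDiffOn ℝ 1 L (Set.Icc 0 1)) :
    IntegrableOn (fun z => (L z - L 0) / z) (Set.Ioo 0 1) ∧
    Tendsto
      (fun z0 : ℝ =>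
        (∫ z in z0..1, L z * (Real.sqrt (z ^ 2 - z0 ^ 2))⁻¹) -
          L 0 * Real.log (2 / z0))
      (nhdsWithin 0 (Set.Ioi 0))
      (nhds (∫ z in Set.Ioo 0 1, (L z - L 0) / z)) := by
  obtain ⟨C, hC0, hC⟩ := lip' hL
  have hLcont : ContinuousOn L (Set.Icc 0 1) := hL.continuousOn
  obtain ⟨M, hM⟩ := isCompact_Icc.exists_bound_of_continuousOn hLcont
  set g : ℝ → ℝ := fun z => (L z - L 0) / z with hgdef
  have hgmeas : AEStronglyMeasurable g (volume.restrict (Set.Ioo 0 1)) := by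
    refine ContinuousOn.aestronglyMeasurable ?_ measurableSet_Ioo
    exact ((hLcont.mono Ioo_subset_Icc_self).sub continuousOn_const).div
      continuousOn_id (fun z hz => ne_of_gt hz.1)
  have hgbound : ∀ z ∈ Set.Ioo (0:ℝ) 1, ‖g z‖ ≤ C := by
    intro z hz
    rw [hgdef, Real.norm_eq_abs, abs_div, abs_of_pos hz.1, div_le_iff₀ hz.1]
    exact hC z ⟨hz.1.le, hz.2.le⟩
  have hgint : IntegrableOn g (Set.Ioo 0 1) := by
    refine Integrable.mono' (g := fun _ => C)
      ((integrableOn_const_iff).mpr (Or.inr measure_Ioo_lt_top)) hgmeas ?_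
    rw [ae_restrict_iff' measurableSet_Ioo]
    exact Filter.Eventually.of_forall hgbound
  refine ⟨hgint, ?_⟩
  set T := ∫ z in Set.Ioo 0 1, g z with hT
  have hev : ∀ᶠ z0 in 𝓝[>](0:ℝ), z0 ∈ Set.Ioo (0:ℝ) 1 :=
    Filter.eventually_of_mem (Ioo_mem_nhdsGT_of_mem ⟨le_refl 0, zero_lt_one⟩) fun x hx => hx
  set funB : ℝ → ℝ := fun z0 => ∫ z in Set.Ioc z0 1, g z with hfunB
  set funA : ℝ → ℝ := fun z0 =>
    ∫ z in Set.Ioc z0 1, (L z - L 0) * (Real.sqrt (z ^ 2 - z0 ^ 2))⁻¹ with hfunA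
  -- B tendsto
  have hB : Tendsto funB (𝓝[>](0:ℝ)) (𝓝 T) := by
    have key : Tendsto (fun z0 : ℝ => ∫ z in Set.Ioo (0:ℝ) 1, (Set.Ioi z0).indicator g z)
        (𝓝[>](0:ℝ)) (𝓝 T) := by
      refine tendsto_integral_filter_of_dominated_convergence (fun _ => C) ?_ ?_ ?_ ?_
      · exact Filter.Eventually.of_forall fun z0 => hgmeas.indicator measurableSet_Ioi
      · refine Filter.Eventually.of_forall fun z0 => ?_
        rw [ae_restrict_iff' measurableSet_Ioo]
        refine Filter.Eventually.of_forall fun z hz => ?_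
        exact (norm_indicator_le_norm_self _ _).trans (hgbound z hz)
      · exact ((integrableOn_const_iff).mpr (Or.inr measure_Ioo_lt_top) :
          IntegrableOn (fun _ => C) (Set.Ioo (0:ℝ) 1) volume)
      · rw [ae_restrict_iff' measurableSet_Ioo]
        refine Filter.Eventually.of_forall fun z hz => ?_
        have hev2 : ∀ᶠ z0 in 𝓝[>](0:ℝ), z0 ∈ Set.Ioo (0:ℝ) z :=
          Filter.eventually_of_mem (Ioo_mem_nhdsGT_of_mem ⟨le_refl 0, hz.1⟩) fun x hx => hx
        refine Tendsto.congr' ?_ tendsto_const_nhds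
        filter_upwards [hev2] with z0 hz0
        rw [Set.indicator_of_mem (show z ∈ Set.Ioi z0 from hz0.2)]
    refine key.congr' ?_
    filter_upwards [hev] with z0 hz0
    rw [integral_indicator measurableSet_Ioi, Measure.restrict_restrict measurableSet_Ioi]
    rw [show Set.Ioi z0 ∩ Set.Ioo 0 1 = Set.Ioo z0 1 by
      ext x
      simp only [Set.mem_inter_iff, Set.mem_Ioi, Set.mem_Ioo]
      exact ⟨fun h => ⟨h.1, h.2.2⟩, fun h => ⟨h.1, hz0.1.trans h.1, h.2⟩⟩]
    rw [hfunB]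
    exact (integral_Ioc_eq_integral_Ioo).symm
  have hint1A : ∀ z0 ∈ Set.Ioo (0:ℝ) 1, IntegrableOn
      (fun z => (L z - L 0) * (Real.sqrt (z ^ 2 - z0 ^ 2))⁻¹) (Set.Ioc z0 1) := by
    intro z0 hz0
    have hk := kernel_int' hz0.1 hz0.2
    refine (hk.const_mul (M + |L 0|)).mono' ?_ ?_
    · exact (((hLcont.mono (Set.Icc_subset_Icc hz0.1.le le_rfl)).mono
        Set.Ioc_subset_Icc_self).sub continuousOn_const).aestronglyMeasurable measurableSet_Ioc
        |>.mul hk.aestronglyMeasurable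
    · rw [ae_restrict_iff' measurableSet_Ioc]
      refine Filter.Eventually.of_forall fun z hz => ?_
      have hzIcc : z ∈ Set.Icc (0:ℝ) 1 := ⟨(hz0.1.trans hz.1).le, hz.2⟩
      have h1 : |L z - L 0| ≤ M + |L 0| := by
        have h2 : |L z| ≤ M := by simpa [Real.norm_eq_abs] using hM z hzIcc
        calc |L z - L 0| ≤ |L z| + |L 0| := abs_sub _ _
          _ ≤ M + |L 0| := by linarith
      rw [Real.norm_eq_abs, abs_mul]
      have hknn : 0 ≤ (Real.sqrt (z ^ 2 - z0 ^ 2))⁻¹ := by positivity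
      rw [abs_of_nonneg hknn]
      exact mul_le_mul_of_nonneg_right h1 hknn
  -- A - B bound and tendsto
  have hABbound : ∀ z0 ∈ Set.Ioo (0:ℝ) 1, ‖funA z0 - funB z0‖ ≤
      C * z0 * (Real.log (1 + Real.sqrt (1 - z0 ^ 2)) - Real.log z0) := by
    intro z0 hz0
    have hk := kernel_int' hz0.1 hz0.2
    have hint1 := hint1A z0 hz0
    have hint2 : IntegrableOn g (Set.Ioc z0 1) := by
      refine (ContinuousOn.integrableOn_Icc ?_).mono_set Set.Ioc_subset_Icc_self
      exact (((hLcont.mono (Set.Icc_subset_Icc hz0.1.le le_rfl)).sub continuousOn_const).div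
        continuousOn_id (fun z hz => ne_of_gt (hz0.1.trans_le hz.1)))
    have hsub : funA z0 - funB z0 =
        ∫ z in Set.Ioc z0 1,
          ((L z - L 0) * (Real.sqrt (z ^ 2 - z0 ^ 2))⁻¹ - g z) := by
      rw [hfunA, hfunB, integral_sub hint1 hint2]
    rw [hsub]
    refine le_trans (MeasureTheory.norm_integral_le_of_norm_le (hk.const_mul (C * z0)) ?_)
      (le_of_eq ?_)
    swap
    · rw [MeasureTheory.integral_const_mul, I1_val' hz0.1 hz0.2]
    · rw [ae_restrict_iff' measurableSet_Ioc]
      refine Filter.Eventually.of_forall fun z hz => ?_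
      have hzpos : 0 < z := hz0.1.trans hz.1
      have hpos : 0 < z ^ 2 - z0 ^ 2 := by nlinarith [hz.1, hz0.1]
      set s := Real.sqrt (z ^ 2 - z0 ^ 2) with hs
      have hspos : 0 < s := Real.sqrt_pos.mpr hpos
      have hs2 : s ^ 2 = z ^ 2 - z0 ^ 2 := Real.sq_sqrt hpos.le
      have hsz : s ≤ z := by nlinarith [hspos]
      have hzs : z - s ≤ z0 := by nlinarith [hz.1, hz0.1, hspos]
      have hinv : z⁻¹ ≤ s⁻¹ := inv_anti₀ hspos hsz
      have heq : (L z - L 0) * s⁻¹ - g z = (L z - L 0) * (s⁻¹ - z⁻¹) := by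
        rw [hgdef]
        field_simp
      rw [heq, Real.norm_eq_abs, abs_mul, abs_of_nonneg (sub_nonneg.mpr hinv)]
      have hL1 : |L z - L 0| ≤ C * z := hC z ⟨hzpos.le, hz.2⟩
      have step1 : |L z - L 0| * (s⁻¹ - z⁻¹) ≤ (C * z) * (s⁻¹ - z⁻¹) :=
        mul_le_mul_of_nonneg_right hL1 (sub_nonneg.mpr hinv)
      refine step1.trans ?_
      have h6 : z * (s⁻¹ - z⁻¹) = (z - s) / s := by
        field_simp
      have h7 : (z - s) / s ≤ z0 / s := by gcongr
      calc C * z * (s⁻¹ - z⁻¹) = C * (z * (s⁻¹ - z⁻¹)) := by ring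
        _ = C * ((z - s) / s) := by rw [h6]
        _ ≤ C * (z0 / s) := mul_le_mul_of_nonneg_left h7 hC0
        _ = C * z0 * s⁻¹ := by rw [div_eq_mul_inv]; ring
  have hAB : Tendsto (fun z0 => funA z0 - funB z0) (𝓝[>](0:ℝ)) (𝓝 0) := by
    have hbtend : Tendsto
        (fun z0 : ℝ => C * z0 * (Real.log (1 + Real.sqrt (1 - z0 ^ 2)) - Real.log z0))
        (𝓝[>](0:ℝ)) (𝓝 0) := by
      have t1 : Tendsto (fun z0 : ℝ => z0 * Real.log (1 + Real.sqrt (1 - z0 ^ 2)))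
          (𝓝[>](0:ℝ)) (𝓝 0) := by
        have hc : ContinuousAt (fun z0 : ℝ => z0 * Real.log (1 + Real.sqrt (1 - z0 ^ 2))) 0 := by
          refine continuousAt_id.mul (ContinuousAt.log ?_ ?_)
          · exact (continuous_const.add ((continuous_const.sub (continuous_pow 2)).sqrt)).continuousAt
          · norm_num
        have := hc.tendsto.mono_left (nhdsWithin_le_nhds (s := Set.Ioi (0:ℝ)))
        simpa using this
      have t2 : Tendsto (fun z0 : ℝ => z0 * Real.log z0) (𝓝[>](0:ℝ)) (𝓝 0) := by
        have h := tendsto_log_mul_rpow_nhdsGT_zero one_pos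
        simp only [Real.rpow_one] at h
        exact h.congr fun x => mul_comm _ _
      have := (t1.const_mul C).sub (t2.const_mul C)
      simp only [mul_zero, sub_zero] at this
      refine this.congr fun z0 => by ring
    refine squeeze_zero_norm' ?_ hbtend
    filter_upwards [hev] with z0 hz0
    exact hABbound z0 hz0
  -- constant piece
  have hCpart : Tendsto (fun z0 : ℝ =>
      L 0 * (Real.log (1 + Real.sqrt (1 - z0 ^ 2)) - Real.log 2)) (𝓝[>](0:ℝ)) (𝓝 0) := by
    have hc : ContinuousAt (fun z0 : ℝ =>
        L 0 * (Real.log (1 + Real.sqrt (1 - z0 ^ 2)) - Real.log 2)) 0 := by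
      refine continuousAt_const.mul (ContinuousAt.sub (ContinuousAt.log ?_ ?_) continuousAt_const)
      · exact (continuous_const.add ((continuous_const.sub (continuous_pow 2)).sqrt)).continuousAt
      · norm_num
    have := hc.tendsto.mono_left (nhdsWithin_le_nhds (s := Set.Ioi (0:ℝ)))
    simpa [one_add_one_eq_two] using this
  have hsum := (hB.add hAB).add hCpart
  rw [add_zero, add_zero] at hsum
  refine hsum.congr' ?_
  filter_upwards [hev] with z0 hz0
  have hk := kernel_int' hz0.1 hz0.2
  have hint1 := hint1A z0 hz0
  have hsplit : (∫ z in z0..1, L z * (Real.sqrt (z ^ 2 - z0 ^ 2))⁻¹) =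
      funA z0 + L 0 * (Real.log (1 + Real.sqrt (1 - z0 ^ 2)) - Real.log z0) := by
    rw [intervalIntegral.integral_of_le hz0.2.le]
    have hcongr : ∫ z in Set.Ioc z0 1, L z * (Real.sqrt (z ^ 2 - z0 ^ 2))⁻¹ =
        ∫ z in Set.Ioc z0 1, ((L z - L 0) * (Real.sqrt (z ^ 2 - z0 ^ 2))⁻¹ +
          L 0 * (Real.sqrt (z ^ 2 - z0 ^ 2))⁻¹) := by
      refine integral_congr_ae (Filter.Eventually.of_forall fun z => ?_)
      ring
    rw [hcongr, integral_add hint1 (hk.const_mul (L 0)), MeasureTheory.integral_const_mul,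
      I1_val' hz0.1 hz0.2, hfunA]
  have hlog : Real.log (2 / z0) = Real.log 2 - Real.log z0 :=
    Real.log_div two_ne_zero (ne_of_gt hz0.1)
  rw [hsplit, hlog]
  ring
end
end

section
/- Let k ≥ 1 and let N be a 2k times continuously differentiable real-valued function on an open neighborhood of the closed unit disc in ℝ². Define A(ρ) = (1/2π)∫₀^{2π} N(ρ·cos θ, ρ·sin θ) dθ for ρ ∈ [0,1]. Then there exist real constants c₀, …, c_{k−1} and a continuous function R: [0,1] → ℝ such that A(ρ) = Σ_{j=0}^{k−1} c_j·ρ^{2j} + R(ρ)·ρ^{2k} for all ρ ∈ [0,1]. -/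
noncomputable section

open MeasureTheory Real Set Filter Topology

lemma aux_iteratedDerivWithin_subset2 {g : ℝ → ℝ} {s t : Set ℝ} {n m : ℕ}
    (hg : ContDiffOn ℝ n g s) (hs : UniqueDiffOn ℝ s) (hts : t ⊆ s)
    (ht : UniqueDiffOn ℝ t) (hmn : m ≤ n) {x : ℝ} (hx : x ∈ t) :
    iteratedDerivWithin m g t x = iteratedDerivWithin m g s x := by
  have h := ((hg.ftaylorSeriesWithin hs).mono hts).eq_iteratedFDerivWithin_of_uniqueDiffOn
    (by exact_mod_cast hmn) ht hx
  simp only [iteratedDerivWithin_eq_iteratedFDerivWithin, ← h]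
  rfl

lemma aux_sum_even2 (a : ℕ → ℝ) (ha : ∀ j, Odd j → a j = 0) (k : ℕ) :
    ∑ j ∈ Finset.range (2 * k), a j = ∑ i ∈ Finset.range k, a (2 * i) := by
  induction k with
  | zero => simp
  | succ k ih =>
    have h2 : 2 * (k + 1) = (2 * k + 1) + 1 := by ring
    rw [h2, Finset.sum_range_succ, Finset.sum_range_succ, ih, Finset.sum_range_succ,
      ha (2 * k + 1) ⟨k, by ring⟩]
    ring

lemma aux_odd_integral_zero (h : ℝ → ℝ) (hc : Continuous h)
    (hodd : ∀ θ, h (θ + π) = - h θ) :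
    ∫ θ in (0:ℝ)..(2 * π), h θ = 0 := by
  have h1 : (∫ θ in (0:ℝ)..π, h θ) + ∫ θ in π..(2*π), h θ = ∫ θ in (0:ℝ)..(2*π), h θ :=
    intervalIntegral.integral_add_adjacent_intervals (μ := volume)
      (hc.intervalIntegrable _ _) (hc.intervalIntegrable _ _)
  have h2 : ∫ θ in π..(2*π), h θ = ∫ θ in (0:ℝ)..π, h (θ + π) := by
    rw [intervalIntegral.integral_comp_add_right]
    norm_num [two_mul]
  have h3 : ∫ θ in (0:ℝ)..π, h (θ + π) = - ∫ θ in (0:ℝ)..π, h θ := by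
    rw [← intervalIntegral.integral_neg]
    exact intervalIntegral.integral_congr fun θ _ => hodd θ
  rw [← h1, h2, h3]; exact add_neg_cancel _

set_option maxHeartbeats 1000000 in
/-- circle averages of a C^{2k} function have an expansion in
even powers of the radius with continuous remainder
(Appendix A.2.1 of the paper). -/
theorem circle_average_even_expansion
    (k : ℕ) (hk : 1 ≤ k)
    (N : ℝ × ℝ → ℝ) (U : Set (ℝ × ℝ)) (hU : IsOpen U)
    (hdisc : {p : ℝ × ℝ | p.1 ^ 2 + p.2 ^ 2 ≤ 1} ⊆ U)
    (hN : ContDiffOn ℝ (2 * k : ℕ) N U)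
    (A : ℝ → ℝ)
    (hA : ∀ ρ : ℝ, A ρ =
      (1 / (2 * π)) * ∫ θ in (0:ℝ)..(2 * π), N (ρ * Real.cos θ, ρ * Real.sin θ)) :
    ∃ c : Fin k → ℝ, ∃ R : ℝ → ℝ, ContinuousOn R (Set.Icc 0 1) ∧
      ∀ ρ ∈ Set.Icc (0:ℝ) 1,
        A ρ = (∑ j : Fin k, c j * ρ ^ (2 * (j : ℕ))) + R ρ * ρ ^ (2 * k) := by
  set v : ℝ → ℝ × ℝ := fun θ => (Real.cos θ, Real.sin θ) with hv_def
  have hv_cont : Continuous v := continuous_cos.prodMk continuous_sin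
  have hv_norm : ∀ θ, ‖v θ‖ ≤ 1 := by
    intro θ
    rw [hv_def]
    simp only [Prod.norm_def, Real.norm_eq_abs]
    exact max_le (abs_cos_le_one θ) (abs_sin_le_one θ)
  have hsq : ∀ (t : ℝ) (θ), (t • v θ).1 ^ 2 + (t • v θ).2 ^ 2 = t ^ 2 := by
    intro t θ
    have := Real.cos_sq_add_sin_sq θ
    simp only [hv_def, Prod.smul_mk, smul_eq_mul]
    nlinarith
  have hKc : IsCompact {p : ℝ × ℝ | p.1 ^ 2 + p.2 ^ 2 ≤ 1} := by
    apply (isCompact_closedBall (0 : ℝ × ℝ) 1).of_isClosed_subset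
    · exact isClosed_le (by fun_prop) continuous_const
    · intro p hp
      simp only [mem_setOf_eq] at hp
      simp only [Metric.mem_closedBall, dist_zero_right, Prod.norm_def, Real.norm_eq_abs]
      refine max_le ?_ ?_ <;>
        nlinarith [sq_nonneg p.1, sq_nonneg p.2, abs_nonneg p.1, abs_nonneg p.2,
          sq_abs p.1, sq_abs p.2]
  obtain ⟨δ, δpos, hδ⟩ := hKc.exists_thickening_subset_open hU hdisc
  have hray : ∀ (t : ℝ) (θ : ℝ), |t| ≤ 1 + δ / 2 → t • v θ ∈ U := by
    intro t θ ht
    by_cases h1 : t ^ 2 ≤ 1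
    · exact hdisc (by rw [mem_setOf_eq, hsq]; exact h1)
    · push_neg at h1
      have habs : 1 < |t| := by
        nlinarith [sq_abs t, abs_nonneg t]
      have htne : t ≠ 0 := by intro h; rw [h, abs_zero] at habs; linarith
      apply hδ
      rw [Metric.mem_thickening_iff]
      refine ⟨(t / |t|) • v θ, ?_, ?_⟩
      · rw [mem_setOf_eq, hsq]
        rw [div_pow, sq_abs]
        rw [div_self (by positivity)]
      · rw [dist_eq_norm, ← sub_smul, norm_smul, Real.norm_eq_abs]
        have h2 : abs (t - t / |t|) = |t| - 1 := by
          rcases lt_or_gt_of_ne htne with h | h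
          · have h4 : 1 < -t := by rwa [abs_of_neg h] at habs
            have h3 : t / |t| = -1 := by
              rw [abs_of_neg h]; field_simp
            rw [h3, abs_of_neg h, sub_neg_eq_add, abs_of_neg (by linarith : t + 1 < 0)]; ring
          · have h4 : 1 < t := by rwa [abs_of_pos h] at habs
            have h3 : t / |t| = 1 := by
              rw [abs_of_pos h]; field_simp
            rw [h3, abs_of_pos h, abs_of_pos (by linarith : (0:ℝ) < t - 1)]
        calc abs (t - t / |t|) * ‖v θ‖ ≤ (|t| - 1) * 1 := by
              apply mul_le_mul (le_of_eq h2) (hv_norm θ) (norm_nonneg _) (by linarith)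
          _ = |t| - 1 := mul_one _
          _ < δ := by linarith
  -- the family of lines
  set L : ℝ → (ℝ →L[ℝ] ℝ × ℝ) := fun θ => (ContinuousLinearMap.id ℝ ℝ).smulRight (v θ)
    with hL_def
  have hL_apply : ∀ θ t, L θ t = t • v θ := by
    intro θ t
    simp [hL_def]
  set S : ℝ → Set ℝ := fun θ => (L θ) ⁻¹' U with hS_def
  have hS_open : ∀ θ, IsOpen (S θ) := fun θ => hU.preimage (L θ).continuous
  have hS_mem : ∀ (θ t : ℝ), |t| ≤ 1 + δ / 2 → t ∈ S θ := by
    intro θ t ht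
    simp only [hS_def, mem_preimage, hL_apply]
    exact hray t θ ht
  have hfθ : ∀ θ, ContDiffOn ℝ (2 * k : ℕ) (N ∘ L θ) (S θ) := fun θ =>
    hN.comp_continuousLinearMap (L θ)
  have hderiv : ∀ (θ : ℝ) (i : ℕ), i ≤ 2 * k → ∀ t ∈ S θ,
      iteratedDerivWithin i (N ∘ L θ) (S θ) t
        = iteratedFDerivWithin ℝ i N U (t • v θ) (fun _ => v θ) := by
    intro θ i hi t ht
    rw [iteratedDerivWithin_eq_iteratedFDerivWithin]
    rw [(L θ).iteratedFDerivWithin_comp_right hN hU.uniqueDiffOn (hS_open θ).uniqueDiffOn ht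
      (by exact_mod_cast hi)]
    rw [ContinuousMultilinearMap.compContinuousLinearMap_apply]
    have h1 : L θ 1 = v θ := by rw [hL_apply, one_smul]
    have h2 : L θ t = t • v θ := hL_apply θ t
    rw [h2]
    congr 1
    funext i
    rw [h1]
  set H : ℕ → ℝ → ℝ := fun j θ => iteratedFDerivWithin ℝ j N U 0 (fun _ => v θ) with hH_def
  have hH_cont : ∀ j, Continuous (H j) := by
    intro j
    exact (iteratedFDerivWithin ℝ j N U 0).cont.comp (continuous_pi fun _ => hv_cont)
  have hv_pi : ∀ θ, v (θ + π) = -v θ := by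
    intro θ
    simp [hv_def, Real.cos_add_pi, Real.sin_add_pi, Prod.neg_mk]
  have hH_odd : ∀ j, Odd j → ∫ θ in (0:ℝ)..(2 * π), H j θ = 0 := by
    intro j hj
    apply aux_odd_integral_zero _ (hH_cont j)
    intro θ
    have : (fun _ : Fin j => v (θ + π)) = fun _ : Fin j => (-1 : ℝ) • v θ := by
      funext i
      rw [hv_pi, neg_one_smul]
    rw [hH_def]
    simp only [this]
    rw [ContinuousMultilinearMap.map_smul_univ]
    simp [hj.neg_one_pow]
  have h2k_pos : 0 < 2 * k := by omega
  have htaylor : ∀ (θ ρ : ℝ), 0 < ρ → ρ ≤ 1 → ∃ x' ∈ Ioo 0 ρ,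
      N (ρ • v θ) = (∑ j ∈ Finset.range (2 * k), ρ ^ j / (j.factorial : ℝ) * H j θ)
        + iteratedFDerivWithin ℝ (2 * k) N U (x' • v θ) (fun _ => v θ) * ρ ^ (2 * k)
          / ((2 * k).factorial : ℝ) := by
    intro θ ρ hρ0 hρ1
    have hIcc_sub : Icc 0 ρ ⊆ S θ := by
      intro t ht
      apply hS_mem θ t
      rw [abs_of_nonneg ht.1]
      linarith [ht.2]
    have hUD : UniqueDiffOn ℝ (Icc 0 ρ) := uniqueDiffOn_Icc hρ0
    have heq : ∀ i, i ≤ 2 * k → ∀ x ∈ Icc 0 ρ,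
        iteratedDerivWithin i (N ∘ L θ) (Icc 0 ρ) x
          = iteratedFDerivWithin ℝ i N U (x • v θ) (fun _ => v θ) := by
      intro i hi x hx
      rw [aux_iteratedDerivWithin_subset2 (hfθ θ) (hS_open θ).uniqueDiffOn hIcc_sub hUD hi hx]
      exact hderiv θ i hi x (hIcc_sub hx)
    have hfIcc : ContDiffOn ℝ (2 * k - 1 : ℕ) (N ∘ L θ) (Icc 0 ρ) :=
      ((hfθ θ).of_le (by exact_mod_cast Nat.sub_le _ _)).mono hIcc_sub
    have hdiff : DifferentiableOn ℝ
        (iteratedDerivWithin (2 * k - 1) (N ∘ L θ) (Icc 0 ρ)) (Ioo 0 ρ) := by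
      have hd1 : DifferentiableOn ℝ (iteratedDerivWithin (2 * k - 1) (N ∘ L θ) (S θ)) (S θ) :=
        (hfθ θ).differentiableOn_iteratedDerivWithin
          (by exact_mod_cast Nat.sub_lt h2k_pos one_pos) (hS_open θ).uniqueDiffOn
      apply (hd1.mono (fun x hx => hIcc_sub (Ioo_subset_Icc_self hx))).congr
      intro x hx
      rw [aux_iteratedDerivWithin_subset2 (hfθ θ) (hS_open θ).uniqueDiffOn hIcc_sub hUD
        (Nat.sub_le _ _) (Ioo_subset_Icc_self hx)]
    obtain ⟨x', hx', hT⟩ := taylor_mean_remainder_lagrange (n := 2 * k - 1) hρ0.ne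
      (by rwa [uIcc_of_le hρ0.le]) (by rwa [uIcc_of_le hρ0.le, uIoo_of_le hρ0.le])
    rw [uIoo_of_le hρ0.le] at hx'
    rw [uIcc_of_le hρ0.le] at hT
    have hm : 2 * k - 1 + 1 = 2 * k := Nat.succ_pred_eq_of_pos h2k_pos
    rw [hm] at hT
    rw [taylor_within_apply] at hT
    rw [hm] at hT
    refine ⟨x', hx', ?_⟩
    have hNL : (N ∘ L θ) ρ = N (ρ • v θ) := by simp [Function.comp, hL_apply]
    have hterm : ∀ j ∈ Finset.range (2 * k),
        (((j.factorial : ℝ))⁻¹ * (ρ - 0) ^ j) • iteratedDerivWithin j (N ∘ L θ) (Icc 0 ρ) 0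
          = ρ ^ j / (j.factorial : ℝ) * H j θ := by
      intro j hj
      rw [heq j (le_of_lt (Finset.mem_range.mp hj)) 0 (left_mem_Icc.mpr (le_of_lt hρ0))]
      rw [zero_smul, sub_zero, smul_eq_mul, hH_def]
      ring
    rw [Finset.sum_congr rfl hterm] at hT
    rw [heq (2 * k) le_rfl x' (Ioo_subset_Icc_self hx')] at hT
    rw [hNL, sub_zero] at hT
    linarith [hT]
  have h0U : (0 : ℝ × ℝ) ∈ U := hdisc (by norm_num)
  have hgN : ContinuousOn (iteratedFDerivWithin ℝ (2 * k) N U) U :=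
    hN.continuousOn_iteratedFDerivWithin (by exact_mod_cast le_refl _) hU.uniqueDiffOn
  set c : Fin k → ℝ := fun i =>
    (1 / (2 * π)) * ((1 : ℝ) / ((2 * (i : ℕ)).factorial)) * ∫ θ in (0:ℝ)..(2 * π), H (2 * (i : ℕ)) θ
    with hc_def
  set CT : ℝ :=
    (1 / (2 * π)) * ((1 : ℝ) / ((2 * k).factorial)) * ∫ θ in (0:ℝ)..(2 * π), H (2 * k) θ
    with hCT_def
  set Pol : ℝ → ℝ := fun ρ => ∑ j : Fin k, c j * ρ ^ (2 * (j : ℕ)) with hPol_def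
  have hfcont : ∀ ρ : ℝ, |ρ| ≤ 1 → Continuous (fun θ => N (ρ • v θ)) := by
    intro ρ hρ
    apply hN.continuousOn.comp_continuous (hv_cont.const_smul ρ)
    intro θ
    exact hray ρ θ (by linarith)
  have key : ∀ ε : ℝ, 0 < ε → ∃ d : ℝ, 0 < d ∧ ∀ ρ : ℝ, 0 < ρ → ρ ≤ 1 → ρ < d →
      |A ρ - Pol ρ - CT * ρ ^ (2 * k)| ≤ ε * ρ ^ (2 * k) := by
    intro ε εpos
    have hcont0 : ContinuousAt (iteratedFDerivWithin ℝ (2 * k) N U) 0 :=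
      hgN.continuousAt (hU.mem_nhds h0U)
    rw [Metric.continuousAt_iff] at hcont0
    obtain ⟨d, dpos, hd⟩ := hcont0 ε εpos
    refine ⟨d, dpos, ?_⟩
    intro ρ hρ0 hρ1 hρd
    -- pointwise estimate
    have hpt : ∀ θ : ℝ, |N (ρ • v θ) - ((∑ j ∈ Finset.range (2 * k),
        ρ ^ j / (j.factorial : ℝ) * H j θ) + H (2 * k) θ * (ρ ^ (2 * k) / ((2 * k).factorial : ℝ)))|
          ≤ ε * ρ ^ (2 * k) := by
      intro θ
      obtain ⟨x', hx', hTay⟩ := htaylor θ ρ hρ0 hρ1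
      set g1 := iteratedFDerivWithin ℝ (2 * k) N U (x' • v θ) with hg1
      set g0 := iteratedFDerivWithin ℝ (2 * k) N U 0 with hg0
      have hH2k : H (2 * k) θ = g0 (fun _ => v θ) := rfl
      have hexp : N (ρ • v θ) - ((∑ j ∈ Finset.range (2 * k),
          ρ ^ j / (j.factorial : ℝ) * H j θ) + H (2 * k) θ * (ρ ^ (2 * k) / ((2 * k).factorial : ℝ)))
            = (g1 (fun _ => v θ) - g0 (fun _ => v θ)) * ρ ^ (2 * k) / ((2 * k).factorial : ℝ) := by
        rw [hTay, hH2k]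
        ring
      rw [hexp]
      have happ : |g1 (fun _ => v θ) - g0 (fun _ => v θ)| ≤ ε := by
        have h1 : ‖(g1 - g0) (fun _ => v θ)‖ ≤ ‖g1 - g0‖ * ∏ _i : Fin (2 * k), ‖v θ‖ :=
          (g1 - g0).le_opNorm _
        have h2 : (∏ _i : Fin (2 * k), ‖v θ‖) ≤ 1 :=
          Finset.prod_le_one (fun _ _ => norm_nonneg _) (fun _ _ => hv_norm θ)
        have h3 : ‖g1 - g0‖ < ε := by
          rw [← dist_eq_norm]
          rw [hg1, hg0]
          apply hd
          rw [dist_zero_right, norm_smul, Real.norm_eq_abs, abs_of_pos hx'.1]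
          calc x' * ‖v θ‖ ≤ x' * 1 := by
                apply mul_le_mul_of_nonneg_left (hv_norm θ) (le_of_lt hx'.1)
            _ = x' := mul_one _
            _ < d := lt_trans hx'.2 (lt_of_le_of_lt (le_refl ρ) hρd)
        have h4 : (g1 - g0) (fun _ => v θ) = g1 (fun _ => v θ) - g0 (fun _ => v θ) :=
          ContinuousMultilinearMap.sub_apply _ _ _
        rw [h4, Real.norm_eq_abs] at h1
        have h5 : ‖g1 - g0‖ * (∏ _i : Fin (2 * k), ‖v θ‖) ≤ ‖g1 - g0‖ * 1 :=
          mul_le_mul_of_nonneg_left h2 (norm_nonneg _)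
        linarith
      have hfact : (1 : ℝ) ≤ ((2 * k).factorial : ℝ) := by
        exact_mod_cast Nat.one_le_iff_ne_zero.mpr (Nat.factorial_ne_zero _)
      rw [abs_div, abs_mul, abs_of_pos (pow_pos hρ0 _), abs_of_pos (by positivity :
        (0:ℝ) < ((2 * k).factorial : ℝ))]
      rw [div_le_iff₀ (by positivity)]
      have hpow : (0:ℝ) < ρ ^ (2 * k) := pow_pos hρ0 _
      have h6 : |g1 (fun _ => v θ) - g0 (fun _ => v θ)| * ρ ^ (2 * k) ≤ ε * ρ ^ (2 * k) :=
        mul_le_mul_of_nonneg_right happ hpow.le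
      have h7 : ε * ρ ^ (2 * k) * 1 ≤ ε * ρ ^ (2 * k) * ((2 * k).factorial : ℝ) :=
        mul_le_mul_of_nonneg_left hfact (by positivity)
      linarith
    -- integral identity
    have hIf : IntervalIntegrable (fun θ => N (ρ • v θ)) volume 0 (2 * π) :=
      (hfcont ρ (by rw [abs_of_pos hρ0]; exact hρ1)).intervalIntegrable _ _
    have hIsum : IntervalIntegrable (fun θ => (∑ j ∈ Finset.range (2 * k),
        ρ ^ j / (j.factorial : ℝ) * H j θ) + H (2 * k) θ * (ρ ^ (2 * k) / ((2 * k).factorial : ℝ)))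
        volume 0 (2 * π) := by
      apply Continuous.intervalIntegrable
      apply Continuous.add
      · exact continuous_finset_sum _ (fun j _ => (continuous_const.mul (hH_cont j)))
      · exact (hH_cont _).mul continuous_const
    have hIeq : (∫ θ in (0:ℝ)..(2 * π), (N (ρ • v θ) - ((∑ j ∈ Finset.range (2 * k),
          ρ ^ j / (j.factorial : ℝ) * H j θ) + H (2 * k) θ * (ρ ^ (2 * k) / ((2 * k).factorial : ℝ)))))
        = (∫ θ in (0:ℝ)..(2 * π), N (ρ • v θ))
          - ((∑ j ∈ Finset.range (2 * k), ρ ^ j / (j.factorial : ℝ) * ∫ θ in (0:ℝ)..(2 * π), H j θ)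
            + (∫ θ in (0:ℝ)..(2 * π), H (2 * k) θ) * (ρ ^ (2 * k) / ((2 * k).factorial : ℝ))) := by
      rw [intervalIntegral.integral_sub hIf hIsum]
      congr 1
      rw [intervalIntegral.integral_add
        (f := fun θ => ∑ j ∈ Finset.range (2 * k), ρ ^ j / (j.factorial : ℝ) * H j θ)
        (g := fun θ => H (2 * k) θ * (ρ ^ (2 * k) / ((2 * k).factorial : ℝ)))
        (Continuous.intervalIntegrable (continuous_finset_sum _
          (fun j _ => (continuous_const.mul (hH_cont j)))) _ _)
        (Continuous.intervalIntegrable ((hH_cont _).mul continuous_const) _ _)]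
      congr 1
      · rw [intervalIntegral.integral_finset_sum
          (f := fun j θ => ρ ^ j / (j.factorial : ℝ) * H j θ)
          (fun j _ => Continuous.intervalIntegrable (continuous_const.mul (hH_cont j)) _ _)]
        exact Finset.sum_congr rfl fun j _ => intervalIntegral.integral_const_mul _ _
      · exact intervalIntegral.integral_mul_const _ _
    have hbound : |∫ θ in (0:ℝ)..(2 * π), (N (ρ • v θ) - ((∑ j ∈ Finset.range (2 * k),
          ρ ^ j / (j.factorial : ℝ) * H j θ) + H (2 * k) θ * (ρ ^ (2 * k) / ((2 * k).factorial : ℝ))))|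
        ≤ ε * ρ ^ (2 * k) * (2 * π) := by
      have := intervalIntegral.norm_integral_le_of_norm_le_const
        (C := ε * ρ ^ (2 * k))
        (f := fun θ => N (ρ • v θ) - ((∑ j ∈ Finset.range (2 * k),
          ρ ^ j / (j.factorial : ℝ) * H j θ) + H (2 * k) θ * (ρ ^ (2 * k) / ((2 * k).factorial : ℝ))))
        (a := 0) (b := 2 * π) (fun x _ => by rw [Real.norm_eq_abs]; exact hpt x)
      rw [Real.norm_eq_abs] at this
      calc |∫ θ in (0:ℝ)..(2 * π), _| ≤ ε * ρ ^ (2 * k) * |2 * π - 0| := this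
        _ = ε * ρ ^ (2 * k) * (2 * π) := by
            rw [sub_zero, abs_of_pos (by positivity)]
    -- reduction of the polynomial part
    have hsum_red : (1 / (2 * π)) * (∑ j ∈ Finset.range (2 * k),
        ρ ^ j / (j.factorial : ℝ) * ∫ θ in (0:ℝ)..(2 * π), H j θ) = Pol ρ := by
      rw [Finset.mul_sum]
      have := aux_sum_even2 (fun j => (1 / (2 * π)) * (ρ ^ j / (j.factorial : ℝ)
        * ∫ θ in (0:ℝ)..(2 * π), H j θ)) (fun j hj => by
          show (1 / (2 * π)) * (ρ ^ j / (j.factorial : ℝ) * ∫ θ in (0:ℝ)..(2 * π), H j θ) = 0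
          rw [hH_odd j hj]; ring) k
      rw [this, hPol_def, Finset.sum_range]
      exact Finset.sum_congr rfl fun i _ => by rw [hc_def]; ring
    -- put everything together
    have hAρ : A ρ = (1 / (2 * π)) * ∫ θ in (0:ℝ)..(2 * π), N (ρ • v θ) := by
      rw [hA ρ]
      have : ∀ θ : ℝ, N (ρ * Real.cos θ, ρ * Real.sin θ) = N (ρ • v θ) := by
        intro θ
        simp [hv_def, Prod.smul_mk]
      simp only [this]
    have hfinal : A ρ - Pol ρ - CT * ρ ^ (2 * k)
        = (1 / (2 * π)) * ∫ θ in (0:ℝ)..(2 * π), (N (ρ • v θ) - ((∑ j ∈ Finset.range (2 * k),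
          ρ ^ j / (j.factorial : ℝ) * H j θ) + H (2 * k) θ * (ρ ^ (2 * k) / ((2 * k).factorial : ℝ)))) := by
      rw [hIeq, hAρ, ← hsum_red, hCT_def]
      ring
    rw [hfinal, abs_mul]
    have hπ : (0:ℝ) < π := Real.pi_pos
    calc |1 / (2 * π)| * |∫ θ in (0:ℝ)..(2 * π), _|
        ≤ (1 / (2 * π)) * (ε * ρ ^ (2 * k) * (2 * π)) := by
          apply mul_le_mul (le_of_eq (abs_of_pos (by positivity))) hbound (abs_nonneg _)
            (by positivity)
      _ = ε * ρ ^ (2 * k) := by field_simp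
  have hPol_cont : Continuous Pol := by
    rw [hPol_def]
    exact continuous_finset_sum _ fun j _ => continuous_const.mul (continuous_pow _)
  have hAc : ContinuousOn A (Icc 0 1) := by
    rw [continuousOn_iff_continuous_restrict]
    have hFc : Continuous (Function.uncurry (fun (x : ↥(Icc (0:ℝ) 1)) (θ : ℝ) =>
        N ((x : ℝ) • v θ))) := by
      apply hN.continuousOn.comp_continuous
      · exact ((continuous_subtype_val.comp continuous_fst).smul
          (hv_cont.comp continuous_snd))
      · rintro ⟨⟨x, hx⟩, θ⟩
        apply hray
        rw [abs_of_nonneg hx.1]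
        linarith [hx.2]
    have hre : (Icc (0:ℝ) 1).restrict A = fun x : ↥(Icc (0:ℝ) 1) =>
        (1 / (2 * π)) * ∫ θ in (0:ℝ)..(2 * π), N ((x : ℝ) • v θ) := by
      funext x
      show A x = _
      rw [hA]
      have : ∀ θ : ℝ, N ((x : ℝ) * Real.cos θ, (x : ℝ) * Real.sin θ) = N ((x : ℝ) • v θ) := by
        intro θ
        simp [hv_def, Prod.smul_mk]
      simp only [this]
    refine (congrArg Continuous hre).mpr ?_
    exact continuous_const.mul
      (intervalIntegral.continuous_parametric_intervalIntegral_of_continuous' hFc 0 (2 * π))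
  set R : ℝ → ℝ := fun ρ => if ρ = 0 then CT else (A ρ - Pol ρ) / ρ ^ (2 * k) with hR_def
  have hR0 : R 0 = CT := by rw [hR_def]; simp
  have hRpos : ∀ ρ : ℝ, ρ ≠ 0 → R ρ = (A ρ - Pol ρ) / ρ ^ (2 * k) := by
    intro ρ hρ
    rw [hR_def]
    simp [hρ]
  have hA0 : A 0 = Pol 0 := by
    have h1 : ∀ θ : ℝ, N ((0:ℝ) * Real.cos θ, (0:ℝ) * Real.sin θ) = N 0 := by
      intro θ
      norm_num
      rfl
    have h2 : A 0 = N 0 := by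
      rw [hA 0]
      simp only [h1]
      rw [intervalIntegral.integral_const, smul_eq_mul]
      have hπ : π ≠ 0 := ne_of_gt Real.pi_pos
      field_simp
      ring
    have hH0 : ∀ θ : ℝ, H 0 θ = N 0 := by
      intro θ
      simp only [hH_def]
      rw [iteratedFDerivWithin_zero_apply]
    have h3 : c ⟨0, by omega⟩ = N 0 := by
      simp only [hc_def]
      norm_num
      simp only [hH0]
      rw [intervalIntegral.integral_const, smul_eq_mul]
      have hπ : π ≠ 0 := ne_of_gt Real.pi_pos
      field_simp
      ring
    have h4 : Pol 0 = c ⟨0, by omega⟩ := by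
      have hp0 : Pol 0 = ∑ j : Fin k, c j * (0:ℝ) ^ (2 * (j : ℕ)) := rfl
      have hz : ∀ j : Fin k, j ∈ Finset.univ → j ≠ ⟨0, by omega⟩ →
          c j * (0:ℝ) ^ (2 * (j : ℕ)) = 0 := by
        intro j _ hj
        have : (j : ℕ) ≠ 0 := fun h => hj (Fin.ext h)
        rw [zero_pow (by omega), mul_zero]
      rw [hp0, Finset.sum_eq_single (⟨0, by omega⟩ : Fin k) hz
        (fun h => absurd (Finset.mem_univ _) h)]
      norm_num
    rw [h2, h4, h3]
  refine ⟨c, R, ?_, ?_⟩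
  · -- continuity
    intro x hx
    rcases eq_or_lt_of_le hx.1 with h0 | h0
    · -- x = 0
      rw [← h0]
      apply (Metric.continuousWithinAt_iff).2
      intro ε εpos
      obtain ⟨d, dpos, hkey⟩ := key (ε / 2) (by positivity)
      refine ⟨min d 1, by positivity, ?_⟩
      intro y hy hyd
      rw [hR0]
      rcases eq_or_lt_of_le hy.1 with hy0 | hy0
      · rw [← hy0, hR0]
        simpa using εpos
      · have hyd' : y < d := by
          rw [Real.dist_eq, sub_zero, abs_of_pos hy0] at hyd
          exact lt_of_lt_of_le hyd (min_le_left _ _)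
        have hb := hkey y hy0 hy.2 hyd'
        have hpow : (0:ℝ) < y ^ (2 * k) := pow_pos hy0 _
        have hRy : R y - CT = (A y - Pol y - CT * y ^ (2 * k)) / y ^ (2 * k) := by
          rw [hRpos y (ne_of_gt hy0)]
          field_simp
        rw [Real.dist_eq, hRy, abs_div, abs_of_pos hpow, div_lt_iff₀ hpow]
        calc |A y - Pol y - CT * y ^ (2 * k)| ≤ ε / 2 * y ^ (2 * k) := hb
          _ < ε * y ^ (2 * k) := by nlinarith
    · -- 0 < x
      have hg : ContinuousWithinAt (fun ρ => (A ρ - Pol ρ) / ρ ^ (2 * k)) (Icc 0 1) x := by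
        apply ContinuousWithinAt.div
        · exact (hAc x hx).sub hPol_cont.continuousWithinAt
        · exact (continuous_pow _).continuousWithinAt
        · exact pow_ne_zero _ (ne_of_gt h0)
      apply hg.congr_of_eventuallyEq
      · have hev : ∀ᶠ ρ in 𝓝[Icc 0 1] x, ρ ≠ 0 :=
          (eventually_ne_nhds (ne_of_gt h0)).filter_mono nhdsWithin_le_nhds
        exact hev.mono fun ρ hρ => hRpos ρ hρ
      · exact hRpos x (ne_of_gt h0)
  · -- the identity
    intro ρ hρ
    have hPolρ : (∑ j : Fin k, c j * ρ ^ (2 * (j : ℕ))) = Pol ρ := rfl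
    rw [hPolρ]
    rcases eq_or_lt_of_le hρ.1 with h0 | h0
    · rw [← h0, hR0, zero_pow (by omega : 2 * k ≠ 0), mul_zero, add_zero]
      exact hA0
    · rw [hRpos ρ (ne_of_gt h0), div_mul_cancel₀ _ (pow_ne_zero _ (ne_of_gt h0))]
      ring
end
end
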